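/- arXiv:2403.09342 — 2 statements merged into one kernel-verified Lean document; each statement's English description precedes it below -/
import Mathlib

section
/- For every two-qudit state ρ on ℂ^{d₁}⊗ℂ^{d₂} (d₁,d₂ ≥ 2) and any Bloch bases Υ₁, Υ₂, one has ((d₁−1)/(d₁d₂))‖r₁‖² + ((d₂−1)/(d₁d₂))‖r₂‖² + (1/4)Σ_{i,j}(T_ρ^{(ij)})² ≤ (d₁d₂−1)/(d₁d₂), where r₁, r₂ are the Bloch vectors of the reduced states ρ₁ = tr₂ρ, ρ₂ = tr₁ρ and T_ρ is the correlation matrix of ρ; moreover equality holds if ρ is a pure state. -/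
open Matrix Finset
open scoped Kronecker ComplexOrder

noncomputable section

/-- A quantum state: a positive semidefinite (hence Hermitian) matrix of trace 1. -/
def IsState {n : Type*} [Fintype n] (ρ : Matrix n n ℂ) : Prop :=
  ρ.PosSemidef ∧ ρ.trace = 1

/-- The pure state (rank-one projection) associated with a vector `ψ`. -/
def pureState {n : Type*} (ψ : n → ℂ) : Matrix n n ℂ :=
  Matrix.vecMulVec ψ (star ψ)

/-- A Bloch basis for `d × d` complex matrices: a family of nonzero traceless Hermitian
matrices with `tr[Υ k * Υ m] = 2 δ_{km}`. -/
def IsBlochBasis (d : ℕ) (Υ : Fin (d ^ 2 - 1) → Matrix (Fin d) (Fin d) ℂ) : Prop :=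
  (∀ k, Υ k ≠ 0) ∧ (∀ k, (Υ k).IsHermitian) ∧ (∀ k, (Υ k).trace = 0) ∧
    (∀ k m, (Υ k * Υ m).trace = if k = m then 2 else 0)

/-- The Bloch vector of a state `ρ` on `ℂ^d` relative to a Bloch basis `Υ`. -/
def blochVector {d : ℕ} (ρ : Matrix (Fin d) (Fin d) ℂ)
    (Υ : Fin (d ^ 2 - 1) → Matrix (Fin d) (Fin d) ℂ) : Fin (d ^ 2 - 1) → ℝ :=
  fun k => Real.sqrt ((d : ℝ) / (2 * ((d : ℝ) - 1))) * ((ρ * Υ k).trace).re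

/-- Partial trace over the first tensor factor. -/
def ptrace1 {d₁ d₂ : ℕ} (ρ : Matrix (Fin d₁ × Fin d₂) (Fin d₁ × Fin d₂) ℂ) :
    Matrix (Fin d₂) (Fin d₂) ℂ :=
  Matrix.of fun j j' => ∑ i, ρ (i, j) (i, j')

/-- Partial trace over the second tensor factor. -/
def ptrace2 {d₁ d₂ : ℕ} (ρ : Matrix (Fin d₁ × Fin d₂) (Fin d₁ × Fin d₂) ℂ) :
    Matrix (Fin d₁) (Fin d₁) ℂ :=
  Matrix.of fun i i' => ∑ j, ρ (i, j) (i', j)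

/-- Partial transpose with respect to the second tensor factor. -/
def ptranspose2 {d₁ d₂ : ℕ} (ρ : Matrix (Fin d₁ × Fin d₂) (Fin d₁ × Fin d₂) ℂ) :
    Matrix (Fin d₁ × Fin d₂) (Fin d₁ × Fin d₂) ℂ :=
  Matrix.of fun p q => ρ (p.1, q.2) (q.1, p.2)

/-- The correlation matrix of a two-qudit state, `T^{ij} = tr[ρ (Υ₁ i ⊗ Υ₂ j)]`. -/
def corrMatrix {d₁ d₂ : ℕ} (ρ : Matrix (Fin d₁ × Fin d₂) (Fin d₁ × Fin d₂) ℂ)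
    (Υ₁ : Fin (d₁ ^ 2 - 1) → Matrix (Fin d₁) (Fin d₁) ℂ)
    (Υ₂ : Fin (d₂ ^ 2 - 1) → Matrix (Fin d₂) (Fin d₂) ℂ) :
    Matrix (Fin (d₁ ^ 2 - 1)) (Fin (d₂ ^ 2 - 1)) ℝ :=
  Matrix.of fun i j => ((ρ * (Υ₁ i ⊗ₖ Υ₂ j)).trace).re

/-- A quantum-classical state `χ = Σ_k α_k σ_k ⊗ |k⟩⟨k|`. -/
def IsQCState {d₁ d₂ : ℕ} (χ : Matrix (Fin d₁ × Fin d₂) (Fin d₁ × Fin d₂) ℂ) : Prop :=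
  ∃ (α : Fin d₂ → ℝ) (σ : Fin d₂ → Matrix (Fin d₁) (Fin d₁) ℂ) (e : Fin d₂ → Fin d₂ → ℂ),
    (∀ k, 0 ≤ α k) ∧ (∑ k, α k = 1) ∧ (∀ k, IsState (σ k)) ∧
    (∀ k l, ∑ i, star (e k i) * e l i = if k = l then (1 : ℂ) else 0) ∧
    χ = ∑ k, (α k : ℂ) • (σ k ⊗ₖ pureState (e k))

/-- The geometric quantum discord (with the Hilbert–Schmidt distance):
`D_g(ρ) = min over quantum-classical χ of tr[(ρ - χ)²]`. -/
def Dg {d₁ d₂ : ℕ} (ρ : Matrix (Fin d₁ × Fin d₂) (Fin d₁ × Fin d₂) ℂ) : ℝ :=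
  sInf {x : ℝ | ∃ χ, IsQCState χ ∧ x = (((ρ - χ) * (ρ - χ)).trace).re}

/-- `η` lists the eigenvalues of the real matrix `G` in decreasing order with algebraic
multiplicities: `η` is antitone and the characteristic polynomial of `G` splits as
`∏ (X - η n)`. -/
def IsEigList {N : ℕ} (G : Matrix (Fin N) (Fin N) ℝ) (η : Fin N → ℝ) : Prop :=
  Antitone η ∧ G.charpoly = ∏ n, (Polynomial.X - Polynomial.C (η n))

/-- A simplex frame in `ℝ^N`: `d` unit vectors summing to zero with pairwise scalar
products `-1/(d-1)`. -/
def IsSimplexFrame {N : ℕ} (d : ℕ) (y : Fin d → Fin N → ℝ) : Prop :=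
  (∀ k, ∑ i, y k i ^ 2 = 1) ∧ (∀ i, ∑ k, y k i = 0) ∧
    (∀ j k, j ≠ k → ∑ i, y j i * y k i = -1 / ((d : ℝ) - 1))

/-- The operator `Π_{Ω_y} = ((d-1)/d) Σ_k y_k y_kᵀ` associated with a simplex frame. -/
def simplexProj {N : ℕ} (d : ℕ) (y : Fin d → Fin N → ℝ) : Matrix (Fin N) (Fin N) ℝ :=
  (((d : ℝ) - 1) / d) • ∑ k, Matrix.vecMulVec (y k) (y k)

/-- The matrix `G(ρ) = ((d₂-1)/(d₁ d₂)) r₂ r₂ᵀ + (1/4) T_ρᵀ T_ρ`. -/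
def Gmat {d₁ d₂ : ℕ} (ρ : Matrix (Fin d₁ × Fin d₂) (Fin d₁ × Fin d₂) ℂ)
    (Υ₁ : Fin (d₁ ^ 2 - 1) → Matrix (Fin d₁) (Fin d₁) ℂ)
    (Υ₂ : Fin (d₂ ^ 2 - 1) → Matrix (Fin d₂) (Fin d₂) ℂ) :
    Matrix (Fin (d₂ ^ 2 - 1)) (Fin (d₂ ^ 2 - 1)) ℝ :=
  (((d₂ : ℝ) - 1) / (d₁ * d₂)) •
      Matrix.vecMulVec (blochVector (ptrace1 ρ) Υ₂) (blochVector (ptrace1 ρ) Υ₂)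
    + (4 : ℝ)⁻¹ • ((corrMatrix ρ Υ₁ Υ₂)ᵀ * corrMatrix ρ Υ₁ Υ₂)

/-- The trace norm (sum of singular values) of a complex square matrix. -/
def traceNorm {n : Type*} [Fintype n] [DecidableEq n] (X : Matrix n n ℂ) : ℝ :=
  ∑ i, Real.sqrt ((Matrix.posSemidef_conjTranspose_mul_self X).1.eigenvalues i)

/-- The negativity `N_ρ = (‖ρ^{T₂}‖₁ - 1)/2`. -/
def negativity {d₁ d₂ : ℕ} (ρ : Matrix (Fin d₁ × Fin d₂) (Fin d₁ × Fin d₂) ℂ) : ℝ :=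
  (traceNorm (ptranspose2 ρ) - 1) / 2

/-- The concurrence of a pure two-qudit state, `C = √(2 (1 - tr[ρ₁²]))`, `ρ₁ = tr₂ ρ`. -/
def concurrence {d₁ d₂ : ℕ} (ρ : Matrix (Fin d₁ × Fin d₂) (Fin d₁ × Fin d₂) ℂ) : ℝ :=
  Real.sqrt (2 * (1 - ((ptrace2 ρ * ptrace2 ρ).trace).re))

end


-- ===== auxiliary lemmas =====

section Aux
open Matrix Finset
open scoped Kronecker ComplexOrder

/-- Parseval / completeness for an orthogonal family of the right cardinality. -/
lemma aux_parseval {m ι : Type*} [Fintype m] [DecidableEq m] [Fintype ι] [DecidableEq ι]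
    (B : ι → Matrix m m ℂ)
    (horth : ∀ x y, (B x * B y).trace = if x = y then 4 else 0)
    (hcard : Fintype.card ι = Fintype.card m * Fintype.card m)
    (X : Matrix m m ℂ) :
    X = (4 : ℂ)⁻¹ • ∑ x, (B x * X).trace • B x := by
  classical
  let Ψ : (ι → ℂ) →ₗ[ℂ] Matrix m m ℂ :=
    { toFun := fun c => ∑ x, c x • B x
      map_add' := by intro a b; simp [add_smul, Finset.sum_add_distrib]
      map_smul' := by intro r a; simp [smul_smul, Finset.smul_sum] }
  have hcoef : ∀ (c : ι → ℂ) (y : ι), (B y * Ψ c).trace = 4 * c y := by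
    intro c y
    simp only [Ψ, LinearMap.coe_mk, AddHom.coe_mk]
    rw [Finset.mul_sum, trace_sum]
    simp only [Matrix.mul_smul, trace_smul, horth, smul_eq_mul, mul_ite, mul_zero, mul_comm]
    simp [Finset.sum_ite_eq]
  have hinj : Function.Injective Ψ := by
    rw [injective_iff_map_eq_zero]
    intro c hc
    funext y
    have h2 := hcoef c y
    rw [hc] at h2
    simpa using h2.symm
  have hsurj : Function.Surjective Ψ :=
    (LinearMap.injective_iff_surjective_of_finrank_eq_finrank
      (by simp [Module.finrank_matrix, hcard])).mp hinj
  obtain ⟨c, rfl⟩ := hsurj X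
  simp only [hcoef]
  show Ψ c = (4:ℂ)⁻¹ • ∑ x, (4 * c x) • B x
  simp only [Ψ, LinearMap.coe_mk, AddHom.coe_mk, Finset.smul_sum, smul_smul]
  congr 1
  funext x
  congr 1
  ring

lemma aux_trace_kron_one {d₁ d₂ : ℕ} (ρ : Matrix (Fin d₁ × Fin d₂) (Fin d₁ × Fin d₂) ℂ)
    (A : Matrix (Fin d₁) (Fin d₁) ℂ) :
    ((A ⊗ₖ (1 : Matrix (Fin d₂) (Fin d₂) ℂ)) * ρ).trace = (ptrace2 ρ * A).trace := by
  rw [Matrix.trace_mul_comm]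
  simp only [Matrix.trace, Matrix.diag, Matrix.mul_apply, ptrace2, kroneckerMap_apply,
    Matrix.of_apply, Matrix.one_apply, Fintype.sum_prod_type, mul_ite, mul_one, mul_zero,
    ite_mul, zero_mul, Finset.sum_ite_eq, Finset.sum_ite_eq', Finset.mem_univ, if_true,
    Finset.sum_mul]
  exact Finset.sum_congr rfl fun i _ => Finset.sum_comm

lemma aux_trace_one_kron {d₁ d₂ : ℕ} (ρ : Matrix (Fin d₁ × Fin d₂) (Fin d₁ × Fin d₂) ℂ)
    (B : Matrix (Fin d₂) (Fin d₂) ℂ) :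
    (((1 : Matrix (Fin d₁) (Fin d₁) ℂ) ⊗ₖ B) * ρ).trace = (ptrace1 ρ * B).trace := by
  rw [Matrix.trace_mul_comm]
  simp only [Matrix.trace, Matrix.diag, Matrix.mul_apply, ptrace1, kroneckerMap_apply,
    Matrix.of_apply, Matrix.one_apply, Fintype.sum_prod_type, mul_ite, mul_one, mul_zero,
    ite_mul, zero_mul, Finset.sum_ite_eq, Finset.sum_ite_eq', Finset.mem_univ, if_true,
    Finset.sum_mul]
  rw [Finset.sum_comm]
  refine Finset.sum_congr rfl fun y _ => ?_
  rw [Finset.sum_congr rfl fun x (_ : x ∈ Finset.univ) =>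
    Finset.sum_comm (s := Finset.univ) (t := Finset.univ)
      (f := fun x1 x2 => if x1 = x then ρ (x, y) (x1, x2) * (1 * B x2 y) else 0)]
  simp only [Finset.sum_ite_eq', Finset.mem_univ, if_true, one_mul]
  rw [Finset.sum_comm]

lemma aux_trace_sq_eq {n : Type*} [Fintype n] [DecidableEq n] (ρ : Matrix n n ℂ)
    (h : ρ.IsHermitian) :
    (ρ * ρ).trace = ∑ i, ((h.eigenvalues i : ℂ))^2 := by
  have hs := h.spectral_theorem
  rw [Unitary.conjStarAlgAut_apply] at hs
  set U := (h.eigenvectorUnitary : Matrix n n ℂ)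
  set D := Matrix.diagonal (RCLike.ofReal ∘ h.eigenvalues : n → ℂ)
  have hU : star U * U = 1 := Matrix.mem_unitaryGroup_iff'.mp h.eigenvectorUnitary.2
  have : ρ * ρ = U * (D * D) * star U := by
    rw [hs]; rw [show U * D * star U * (U * D * star U) = U * D * (star U * U) * D * star U by
      noncomm_ring]
    rw [hU]
    noncomm_ring
  rw [this, Matrix.trace_mul_cycle, ← Matrix.mul_assoc, hU, Matrix.one_mul,
    Matrix.diagonal_mul_diagonal, Matrix.trace_diagonal]
  simp [sq]

lemma aux_trace_sq_le {n : Type*} [Fintype n] [DecidableEq n] (ρ : Matrix n n ℂ)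
    (h : ρ.PosSemidef) (ht : ρ.trace = 1) : ((ρ * ρ).trace).re ≤ 1 := by
  have hH := h.1
  have hev : ∀ i, 0 ≤ hH.eigenvalues i := fun i => h.eigenvalues_nonneg i
  have htr : ρ.trace = ∑ i, ((hH.eigenvalues i : ℂ)) := by
    conv_lhs => rw [hH.spectral_theorem, Unitary.conjStarAlgAut_apply]
    rw [Matrix.trace_mul_cycle,
      Matrix.mem_unitaryGroup_iff'.mp hH.eigenvectorUnitary.2, Matrix.one_mul,
      Matrix.trace_diagonal]
    rfl
  have hsum : ∑ i, hH.eigenvalues i = 1 := by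
    have h2 := congrArg Complex.re (htr.symm.trans ht)
    simpa [Complex.re_sum] using h2
  rw [aux_trace_sq_eq ρ hH]
  rw [show ((∑ i, ((hH.eigenvalues i : ℂ))^2)).re = ∑ i, (hH.eigenvalues i)^2 by
    simp [← Complex.ofReal_pow, Complex.re_sum]]
  calc ∑ i, (hH.eigenvalues i)^2 ≤ ∑ i, hH.eigenvalues i := by
        apply Finset.sum_le_sum
        intro i _
        have h1 : hH.eigenvalues i ≤ 1 := by
          rw [← hsum]
          exact Finset.single_le_sum (fun j _ => hev j) (Finset.mem_univ i)
        nlinarith [hev i]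
    _ = 1 := hsum

lemma aux_kron_conjTranspose {m n : Type*} (A : Matrix m m ℂ) (B : Matrix n n ℂ) :
    (A ⊗ₖ B)ᴴ = Aᴴ ⊗ₖ Bᴴ := by
  ext ⟨i, j⟩ ⟨i', j'⟩
  simp [Matrix.conjTranspose_apply, Matrix.kroneckerMap_apply]

lemma aux_trace_real {n : Type*} [Fintype n] {A ρ : Matrix n n ℂ}
    (hA : A.IsHermitian) (hρ : ρ.IsHermitian) :
    (((A * ρ).trace).re : ℂ) = (A * ρ).trace := by
  rw [← Complex.conj_eq_iff_re]
  have : (A * ρ)ᴴ = ρ * A := by rw [Matrix.conjTranspose_mul, hA.eq, hρ.eq]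
  calc (starRingEnd ℂ) (A * ρ).trace = (A * ρ)ᴴ.trace := (Matrix.trace_conjTranspose _).symm
    _ = (ρ * A).trace := by rw [this]
    _ = (A * ρ).trace := Matrix.trace_mul_comm _ _

lemma aux_pure_sq {n : Type*} [Fintype n] (ψ : n → ℂ) (hψ : ∑ i, Complex.normSq (ψ i) = 1) :
    pureState ψ * pureState ψ = pureState ψ := by
  ext p q
  simp only [pureState, Matrix.mul_apply, Matrix.vecMulVec_apply, Pi.star_apply]
  have : ∀ r, ψ p * star (ψ r) * (ψ r * star (ψ q))
      = (Complex.normSq (ψ r) : ℂ) * (ψ p * star (ψ q)) := by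
    intro r
    simp only [Complex.star_def]
    rw [← Complex.mul_conj]
    ring
  rw [Finset.sum_congr rfl fun r _ => this r, ← Finset.sum_mul]
  rw [show (∑ r, (Complex.normSq (ψ r) : ℂ)) = ((∑ r, Complex.normSq (ψ r) : ℝ) : ℂ) by
    push_cast; ring]
  rw [hψ]
  simp

end Aux

/-- `((d₁-1)/(d₁d₂))‖r₁‖² + ((d₂-1)/(d₁d₂))‖r₂‖² + (1/4)Σ_{i,j}(T_ρ^{ij})²
≤ (d₁d₂-1)/(d₁d₂)`, with equality if `ρ` is pure. -/
theorem stmt14 {d₁ d₂ : ℕ} (hd₁ : 2 ≤ d₁) (hd₂ : 2 ≤ d₂)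
    (ρ : Matrix (Fin d₁ × Fin d₂) (Fin d₁ × Fin d₂) ℂ) (hρ : IsState ρ)
    (Υ₁ : Fin (d₁ ^ 2 - 1) → Matrix (Fin d₁) (Fin d₁) ℂ) (hΥ₁ : IsBlochBasis d₁ Υ₁)
    (Υ₂ : Fin (d₂ ^ 2 - 1) → Matrix (Fin d₂) (Fin d₂) ℂ) (hΥ₂ : IsBlochBasis d₂ Υ₂) :
    ((d₁ : ℝ) - 1) / (d₁ * d₂) * (∑ i, blochVector (ptrace2 ρ) Υ₁ i ^ 2)
      + ((d₂ : ℝ) - 1) / (d₁ * d₂) * (∑ j, blochVector (ptrace1 ρ) Υ₂ j ^ 2)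
      + (4 : ℝ)⁻¹ * (∑ i, ∑ j, corrMatrix ρ Υ₁ Υ₂ i j ^ 2)
      ≤ ((d₁ : ℝ) * d₂ - 1) / (d₁ * d₂) ∧
    ((∃ ψ : Fin d₁ × Fin d₂ → ℂ, (∑ i, Complex.normSq (ψ i) = 1) ∧ ρ = pureState ψ) →
      ((d₁ : ℝ) - 1) / (d₁ * d₂) * (∑ i, blochVector (ptrace2 ρ) Υ₁ i ^ 2)
        + ((d₂ : ℝ) - 1) / (d₁ * d₂) * (∑ j, blochVector (ptrace1 ρ) Υ₂ j ^ 2)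
        + (4 : ℝ)⁻¹ * (∑ i, ∑ j, corrMatrix ρ Υ₁ Υ₂ i j ^ 2)
        = ((d₁ : ℝ) * d₂ - 1) / (d₁ * d₂)) := by
  classical
  obtain ⟨hΥ₁ne, hΥ₁H, hΥ₁tr, hΥ₁o⟩ := hΥ₁
  obtain ⟨hΥ₂ne, hΥ₂H, hΥ₂tr, hΥ₂o⟩ := hΥ₂
  have hρH : ρ.IsHermitian := hρ.1.1
  have hρt : ρ.trace = 1 := hρ.2
  have hd₁0 : (0:ℝ) < d₁ := by
    have : (2:ℝ) ≤ d₁ := by exact_mod_cast hd₁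
    linarith
  have hd₂0 : (0:ℝ) < d₂ := by
    have : (2:ℝ) ≤ d₂ := by exact_mod_cast hd₂
    linarith
  have hd₁1 : (1:ℝ) < d₁ := by
    have : (2:ℝ) ≤ d₁ := by exact_mod_cast hd₁
    linarith
  have hd₂1 : (1:ℝ) < d₂ := by
    have : (2:ℝ) ≤ d₂ := by exact_mod_cast hd₂
    linarith
  set r1 : ℝ := Real.sqrt (2 / d₁) with hr1def
  set r2 : ℝ := Real.sqrt (2 / d₂) with hr2def
  have hr1sq : r1 * r1 = 2 / d₁ := Real.mul_self_sqrt (by apply div_nonneg <;> linarith)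
  have hr2sq : r2 * r2 = 2 / d₂ := Real.mul_self_sqrt (by apply div_nonneg <;> linarith)
  set e₁ : Fin (d₁ ^ 2 - 1) ⊕ Unit → Matrix (Fin d₁) (Fin d₁) ℂ :=
    Sum.elim Υ₁ (fun _ => (r1 : ℂ) • 1) with he₁
  set e₂ : Fin (d₂ ^ 2 - 1) ⊕ Unit → Matrix (Fin d₂) (Fin d₂) ℂ :=
    Sum.elim Υ₂ (fun _ => (r2 : ℂ) • 1) with he₂
  set B : (Fin (d₁ ^ 2 - 1) ⊕ Unit) × (Fin (d₂ ^ 2 - 1) ⊕ Unit) →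
      Matrix (Fin d₁ × Fin d₂) (Fin d₁ × Fin d₂) ℂ :=
    fun x => e₁ x.1 ⊗ₖ e₂ x.2 with hB
  have horth1 : ∀ a b, (e₁ a * e₁ b).trace = if a = b then 2 else 0 := by
    rintro (a | a) (b | b)
    · simpa [he₁] using hΥ₁o a b
    · simp [he₁, Matrix.mul_smul, Matrix.mul_one, hΥ₁tr]
    · simp [he₁, Matrix.smul_mul, Matrix.one_mul, hΥ₁tr]
    · have hcard1 : ((Fintype.card (Fin d₁) : ℂ)) = (d₁ : ℂ) := by simp
      have hd₁c : (d₁ : ℂ) ≠ 0 := by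
        simpa using (by omega : d₁ ≠ 0)
      simp only [he₁, Sum.elim_inr, Matrix.smul_mul, Matrix.mul_smul, Matrix.one_mul,
        Matrix.trace_smul, smul_eq_mul, Matrix.trace_one, hcard1]
      rw [show ((r1:ℂ)) * ((r1:ℂ) * (d₁:ℂ)) = ((r1*r1 : ℝ):ℂ) * (d₁:ℂ) by push_cast; ring,
        hr1sq]
      simp only [if_true]
      push_cast
      field_simp
  have horth2 : ∀ a b, (e₂ a * e₂ b).trace = if a = b then 2 else 0 := by
    rintro (a | a) (b | b)
    · simpa [he₂] using hΥ₂o a b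
    · simp [he₂, Matrix.mul_smul, Matrix.mul_one, hΥ₂tr]
    · simp [he₂, Matrix.smul_mul, Matrix.one_mul, hΥ₂tr]
    · have hcard1 : ((Fintype.card (Fin d₂) : ℂ)) = (d₂ : ℂ) := by simp
      have hd₂c : (d₂ : ℂ) ≠ 0 := by
        simpa using (by omega : d₂ ≠ 0)
      simp only [he₂, Sum.elim_inr, Matrix.smul_mul, Matrix.mul_smul, Matrix.one_mul,
        Matrix.trace_smul, smul_eq_mul, Matrix.trace_one, hcard1]
      rw [show ((r2:ℂ)) * ((r2:ℂ) * (d₂:ℂ)) = ((r2*r2 : ℝ):ℂ) * (d₂:ℂ) by push_cast; ring,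
        hr2sq]
      simp only [if_true]
      push_cast
      field_simp
  have horth : ∀ x y, (B x * B y).trace = if x = y then 4 else 0 := by
    intro x y
    rw [hB]
    rw [show e₁ x.1 ⊗ₖ e₂ x.2 * (e₁ y.1 ⊗ₖ e₂ y.2) = (e₁ x.1 * e₁ y.1) ⊗ₖ (e₂ x.2 * e₂ y.2)
      from (Matrix.mul_kronecker_mul _ _ _ _).symm]
    rw [Matrix.trace_kronecker, horth1, horth2]
    by_cases h1 : x.1 = y.1 <;> by_cases h2 : x.2 = y.2 <;>
      simp [Prod.ext_iff, h1, h2] <;> norm_num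
  have hcard : Fintype.card ((Fin (d₁ ^ 2 - 1) ⊕ Unit) × (Fin (d₂ ^ 2 - 1) ⊕ Unit))
      = Fintype.card (Fin d₁ × Fin d₂) * Fintype.card (Fin d₁ × Fin d₂) := by
    have h1 : d₁ ^ 2 - 1 + 1 = d₁ ^ 2 := Nat.succ_pred_eq_of_pos (pow_pos (by omega) 2)
    have h2 : d₂ ^ 2 - 1 + 1 = d₂ ^ 2 := Nat.succ_pred_eq_of_pos (pow_pos (by omega) 2)
    simp only [Fintype.card_prod, Fintype.card_sum, Fintype.card_fin, Fintype.card_unit]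
    rw [h1, h2]
    ring
  have hpar := aux_parseval B horth hcard ρ
  have htr2 : (ρ * ρ).trace = (4 : ℂ)⁻¹ * ∑ x, ((B x * ρ).trace) ^ 2 := by
    nth_rewrite 2 [hpar]
    rw [Matrix.mul_smul, Matrix.trace_smul, Matrix.mul_sum, Matrix.trace_sum]
    simp only [Matrix.mul_smul, Matrix.trace_smul, smul_eq_mul]
    congr 1
    refine Finset.sum_congr rfl fun x _ => ?_
    rw [Matrix.trace_mul_comm ρ (B x), sq]
  have hBH : ∀ x, (B x).IsHermitian := by
    have he₁H : ∀ a, (e₁ a).IsHermitian := by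
      rintro (a | a)
      · simpa [he₁] using hΥ₁H a
      · simp [he₁, Matrix.IsHermitian, Matrix.conjTranspose_smul, Complex.star_def,
          Complex.conj_ofReal]
    have he₂H : ∀ a, (e₂ a).IsHermitian := by
      rintro (a | a)
      · simpa [he₂] using hΥ₂H a
      · simp [he₂, Matrix.IsHermitian, Matrix.conjTranspose_smul, Complex.star_def,
          Complex.conj_ofReal]
    intro x
    show (B x)ᴴ = B x
    rw [hB]
    rw [aux_kron_conjTranspose, (he₁H x.1).eq, (he₂H x.2).eq]
  have hreal : ∀ x, ((((B x * ρ).trace).re : ℝ) : ℂ) = (B x * ρ).trace := fun x =>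
    aux_trace_real (hBH x) hρH
  have hre2 : ((ρ * ρ).trace).re = (4 : ℝ)⁻¹ * ∑ x, (((B x * ρ).trace).re) ^ 2 := by
    have : (ρ * ρ).trace = (((4 : ℝ)⁻¹ * ∑ x, (((B x * ρ).trace).re) ^ 2 : ℝ) : ℂ) := by
      rw [htr2]
      rw [show (∑ x, ((B x * ρ).trace) ^ 2)
          = ((∑ x, (((B x * ρ).trace).re) ^ 2 : ℝ) : ℂ) by
        push_cast
        exact Finset.sum_congr rfl fun x _ => by rw [hreal x]]
      push_cast
      ring
    rw [this, Complex.ofReal_re]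
  -- values of the coefficients on the four blocks
  have hfTT : ∀ i j, (((B (Sum.inl i, Sum.inl j) * ρ).trace).re) = corrMatrix ρ Υ₁ Υ₂ i j := by
    intro i j
    rw [hB]
    simp only [he₁, he₂, Sum.elim_inl]
    rw [Matrix.trace_mul_comm]
    rfl
  have hfS : ∀ i, (((B (Sum.inl i, Sum.inr ()) * ρ).trace).re)
      = r2 * ((ptrace2 ρ * Υ₁ i).trace).re := by
    intro i
    rw [hB]
    simp only [he₁, he₂, Sum.elim_inl, Sum.elim_inr]
    rw [Matrix.kronecker_smul, Matrix.smul_mul, Matrix.trace_smul]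
    rw [aux_trace_kron_one]
    simp [Complex.smul_re]
  have hfT : ∀ j, (((B (Sum.inr (), Sum.inl j) * ρ).trace).re)
      = r1 * ((ptrace1 ρ * Υ₂ j).trace).re := by
    intro j
    rw [hB]
    simp only [he₁, he₂, Sum.elim_inl, Sum.elim_inr]
    rw [Matrix.smul_kronecker, Matrix.smul_mul, Matrix.trace_smul]
    rw [aux_trace_one_kron]
    simp [Complex.smul_re]
  have hfU : (((B (Sum.inr (), Sum.inr ()) * ρ).trace).re) = r1 * r2 := by
    rw [hB]
    simp only [he₁, he₂, Sum.elim_inr]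
    rw [Matrix.smul_kronecker, Matrix.kronecker_smul, Matrix.one_kronecker_one,
      Matrix.smul_mul, Matrix.smul_mul, Matrix.one_mul, Matrix.trace_smul, Matrix.trace_smul,
      hρt]
    simp [Complex.smul_re]
  -- split the big sum
  have hsplit : ∑ x, (((B x * ρ).trace).re) ^ 2
      = (∑ i, ∑ j, corrMatrix ρ Υ₁ Υ₂ i j ^ 2)
        + (2 / (d₂:ℝ)) * (∑ i, (((ptrace2 ρ * Υ₁ i).trace).re) ^ 2)
        + (2 / (d₁:ℝ)) * (∑ j, (((ptrace1 ρ * Υ₂ j).trace).re) ^ 2)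
        + (2 / (d₁:ℝ)) * (2 / (d₂:ℝ)) := by
    rw [Fintype.sum_prod_type]
    rw [Fintype.sum_sum_type]
    simp only [Fintype.sum_sum_type, Finset.univ_unique, Finset.sum_singleton]
    rw [Finset.sum_add_distrib]
    have e1 : ∀ i, ∑ j, (((B (Sum.inl i, Sum.inl j) * ρ).trace).re) ^ 2
        = ∑ j, corrMatrix ρ Υ₁ Υ₂ i j ^ 2 :=
      fun i => Finset.sum_congr rfl fun j _ => by rw [hfTT]
    have e2 : ∀ i, (((B (Sum.inl i, Sum.inr (default : Unit)) * ρ).trace).re) ^ 2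
        = (2 / (d₂:ℝ)) * (((ptrace2 ρ * Υ₁ i).trace).re) ^ 2 := by
      intro i
      rw [show (default : Unit) = () from rfl, hfS, mul_pow, sq, hr2sq, sq]
    have e3 : ∀ j, (((B (Sum.inr (default : Unit), Sum.inl j) * ρ).trace).re) ^ 2
        = (2 / (d₁:ℝ)) * (((ptrace1 ρ * Υ₂ j).trace).re) ^ 2 := by
      intro j
      rw [show (default : Unit) = () from rfl, hfT, mul_pow, sq, hr1sq, sq]
    have e4 : (((B (Sum.inr (default : Unit), Sum.inr (default : Unit)) * ρ).trace).re) ^ 2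
        = (2 / (d₁:ℝ)) * (2 / (d₂:ℝ)) := by
      rw [show (default : Unit) = () from rfl, hfU, mul_pow, sq, hr1sq, sq, hr2sq]
    rw [Finset.sum_congr rfl fun i (_ : i ∈ Finset.univ) => e1 i,
      Finset.sum_congr rfl fun i (_ : i ∈ Finset.univ) => e2 i,
      Finset.sum_congr rfl fun j (_ : j ∈ Finset.univ) => e3 j, e4]
    simp only [← Finset.mul_sum]
    ring
  -- identify the statement LHS
  have hq1 : (0:ℝ) ≤ (d₁:ℝ) / (2 * ((d₁:ℝ) - 1)) := by
    apply div_nonneg <;> linarith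
  have hq2 : (0:ℝ) ≤ (d₂:ℝ) / (2 * ((d₂:ℝ) - 1)) := by
    apply div_nonneg <;> linarith
  have hbl1 : ∑ i, blochVector (ptrace2 ρ) Υ₁ i ^ 2
      = ((d₁:ℝ) / (2 * ((d₁:ℝ) - 1))) * ∑ i, (((ptrace2 ρ * Υ₁ i).trace).re) ^ 2 := by
    rw [Finset.mul_sum]
    refine Finset.sum_congr rfl fun i _ => ?_
    simp only [blochVector]
    rw [mul_pow, Real.sq_sqrt hq1]
  have hbl2 : ∑ j, blochVector (ptrace1 ρ) Υ₂ j ^ 2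
      = ((d₂:ℝ) / (2 * ((d₂:ℝ) - 1))) * ∑ j, (((ptrace1 ρ * Υ₂ j).trace).re) ^ 2 := by
    rw [Finset.mul_sum]
    refine Finset.sum_congr rfl fun j _ => ?_
    simp only [blochVector]
    rw [mul_pow, Real.sq_sqrt hq2]
  have hkey : ((d₁ : ℝ) - 1) / (d₁ * d₂) * (∑ i, blochVector (ptrace2 ρ) Υ₁ i ^ 2)
      + ((d₂ : ℝ) - 1) / (d₁ * d₂) * (∑ j, blochVector (ptrace1 ρ) Υ₂ j ^ 2)
      + (4 : ℝ)⁻¹ * (∑ i, ∑ j, corrMatrix ρ Υ₁ Υ₂ i j ^ 2)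
      = ((ρ * ρ).trace).re - 1 / ((d₁:ℝ) * d₂) := by
    rw [hre2, hsplit, hbl1, hbl2]
    have h1 : (d₁:ℝ) - 1 ≠ 0 := by linarith
    have h2 : (d₂:ℝ) - 1 ≠ 0 := by linarith
    have h3 : (d₁:ℝ) ≠ 0 := ne_of_gt hd₁0
    have h4 : (d₂:ℝ) ≠ 0 := ne_of_gt hd₂0
    set X := ∑ i, (((ptrace2 ρ * Υ₁ i).trace).re) ^ 2 with hX
    set Y := ∑ j, (((ptrace1 ρ * Υ₂ j).trace).re) ^ 2 with hY
    set Z := ∑ i, ∑ j, corrMatrix ρ Υ₁ Υ₂ i j ^ 2 with hZ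
    field_simp
    ring
  constructor
  · have hle := aux_trace_sq_le ρ hρ.1 hρ.2
    rw [hkey]
    have heq : ((d₁:ℝ) * d₂ - 1) / ((d₁:ℝ) * d₂) = 1 - 1 / ((d₁:ℝ) * d₂) := by
      field_simp
    rw [heq]
    linarith
  · rintro ⟨ψ, hψ1, hψ2⟩
    have hpure : (ρ * ρ).trace = 1 := by
      conv_lhs => rw [hψ2, aux_pure_sq ψ hψ1, ← hψ2]
      exact hρt
    rw [hkey, hpure]
    have h3 : (d₁:ℝ) ≠ 0 := ne_of_gt hd₁0
    have h4 : (d₂:ℝ) ≠ 0 := ne_of_gt hd₂0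
    norm_num
    field_simp
end

section
/- For every two-qudit state ρ on ℂ^d⊗ℂ^d (d ≥ 2), pure or mixed, and any Bloch bases Υ₁, Υ₂, the spectral (operator) norm of the correlation matrix of ρ satisfies ‖T_ρ‖₀ := sup_{‖n‖=1} ‖T_ρ n‖ ≤ 2(d−1)/d. -/
open Matrix Finset
open scoped Kronecker ComplexOrder

section AuxStmt19
open Matrix Finset
open scoped Kronecker ComplexOrder

private lemma herm_trace_eq' {n : Type*} [Fintype n] [DecidableEq n] {A : Matrix n n ℂ}
    (hA : A.IsHermitian) : A.trace = ∑ i, (hA.eigenvalues i : ℂ) := by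
  conv_lhs => rw [hA.spectral_theorem, Unitary.conjStarAlgAut_apply]
  rw [Matrix.trace_mul_cycle]
  rw [show (star hA.eigenvectorUnitary : Matrix n n ℂ) * hA.eigenvectorUnitary = 1 from
    Unitary.coe_star_mul_self _]
  rw [one_mul, Matrix.trace_diagonal]
  rfl

private lemma herm_trace_sq_eq' {n : Type*} [Fintype n] [DecidableEq n] {A : Matrix n n ℂ}
    (hA : A.IsHermitian) : (A * A).trace = ∑ i, (hA.eigenvalues i : ℂ) ^ 2 := by
  have hu : (star hA.eigenvectorUnitary : Matrix n n ℂ) * hA.eigenvectorUnitary.1 = 1 :=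
    Unitary.coe_star_mul_self _
  have key : A * A = hA.eigenvectorUnitary.1 *
      (diagonal (RCLike.ofReal ∘ hA.eigenvalues) * diagonal (RCLike.ofReal ∘ hA.eigenvalues)) *
      (star hA.eigenvectorUnitary : Matrix n n ℂ) := by
    conv_lhs => rw [hA.spectral_theorem, Unitary.conjStarAlgAut_apply]
    calc hA.eigenvectorUnitary.1 * diagonal (RCLike.ofReal ∘ hA.eigenvalues) *
          (star hA.eigenvectorUnitary : Matrix n n ℂ) *
          (hA.eigenvectorUnitary.1 * diagonal (RCLike.ofReal ∘ hA.eigenvalues) *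
            (star hA.eigenvectorUnitary : Matrix n n ℂ))
        = hA.eigenvectorUnitary.1 * diagonal (RCLike.ofReal ∘ hA.eigenvalues) *
            ((star hA.eigenvectorUnitary : Matrix n n ℂ) * hA.eigenvectorUnitary.1) *
            diagonal (RCLike.ofReal ∘ hA.eigenvalues) *
            (star hA.eigenvectorUnitary : Matrix n n ℂ) := by simp only [mul_assoc]
      _ = _ := by rw [hu, mul_one]; simp only [mul_assoc]
  rw [key, Matrix.trace_mul_cycle, hu, one_mul, diagonal_mul_diagonal, Matrix.trace_diagonal]
  simp [sq]

private lemma sub_psd' {n : Type*} [Fintype n] [DecidableEq n] {A : Matrix n n ℂ}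
    (hA : A.IsHermitian) (c : ℝ) (h : ∀ i, hA.eigenvalues i ≤ c) :
    ((c : ℂ) • 1 - A).PosSemidef := by
  have key : (c : ℂ) • 1 - A =
      hA.eigenvectorUnitary.1 * diagonal (fun i => ((c - hA.eigenvalues i : ℝ) : ℂ)) *
        (star hA.eigenvectorUnitary : Matrix n n ℂ) := by
    have hd : diagonal (fun i => ((c - hA.eigenvalues i : ℝ) : ℂ)) =
        (c : ℂ) • 1 - diagonal (RCLike.ofReal ∘ hA.eigenvalues) := by
      ext i j
      by_cases hij : i = j <;>
        simp [diagonal_apply, hij, Matrix.sub_apply, Matrix.smul_apply, Matrix.one_apply]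
    rw [hd, Matrix.mul_sub, Matrix.sub_mul]
    conv_lhs => rw [hA.spectral_theorem, Unitary.conjStarAlgAut_apply]
    congr 1
    rw [Matrix.mul_smul, mul_one, Matrix.smul_mul]
    rw [show hA.eigenvectorUnitary.1 * (star hA.eigenvectorUnitary : Matrix n n ℂ) = 1 from
      Unitary.coe_mul_star_self _]
  rw [key]
  exact (posSemidef_diagonal_iff.mpr fun i => by
    rw [Complex.zero_le_real]; linarith [h i]).mul_mul_conjTranspose_same _

private lemma kron_conjTranspose' {l m n p : Type*} (A : Matrix l m ℂ) (B : Matrix n p ℂ) :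
    (A ⊗ₖ B)ᴴ = Aᴴ ⊗ₖ Bᴴ := by
  ext ⟨i, j⟩ ⟨k, l⟩
  simp [Matrix.conjTranspose_apply, Matrix.kroneckerMap_apply, mul_comm]

open scoped MatrixOrder in
private lemma kron_posSemidef' {m n : Type*} [Fintype m] [Fintype n] [DecidableEq m]
    [DecidableEq n] {A : Matrix m m ℂ} {B : Matrix n n ℂ}
    (hA : A.PosSemidef) (hB : B.PosSemidef) : (A ⊗ₖ B).PosSemidef := by
  obtain ⟨C, rfl⟩ : ∃ C : Matrix m m ℂ, _ = Cᴴ * C :=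
    CStarAlgebra.nonneg_iff_eq_star_mul_self.mp hA.nonneg
  obtain ⟨D, rfl⟩ : ∃ D : Matrix n n ℂ, _ = Dᴴ * D :=
    CStarAlgebra.nonneg_iff_eq_star_mul_self.mp hB.nonneg
  rw [Matrix.mul_kronecker_mul, ← kron_conjTranspose']
  exact Matrix.posSemidef_conjTranspose_mul_self _

open scoped MatrixOrder in
private lemma trace_mul_psd_re_nonneg' {n : Type*} [Fintype n] [DecidableEq n]
    {ρ M : Matrix n n ℂ} (hρ : ρ.PosSemidef) (hM : M.PosSemidef) :
    0 ≤ ((ρ * M).trace).re := by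
  obtain ⟨C, rfl⟩ : ∃ C : Matrix n n ℂ, _ = Cᴴ * C :=
    CStarAlgebra.nonneg_iff_eq_star_mul_self.mp hρ.nonneg
  rw [Matrix.mul_assoc, Matrix.trace_mul_comm]
  have hP : (C * M * Cᴴ).PosSemidef := hM.mul_mul_conjTranspose_same C
  have : 0 ≤ (C * M * Cᴴ).trace := by
    rw [Matrix.trace]
    apply Finset.sum_nonneg
    intro i _
    have h := hP.dotProduct_mulVec_nonneg (Pi.single i 1)
    simpa [dotProduct, Pi.single_apply, Matrix.mulVec] using h
  have h2 := (Complex.le_def.mp this).1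
  simpa using h2

private lemma eig_bound' {D : ℕ} (hD : 2 ≤ D) {A : Matrix (Fin D) (Fin D) ℂ}
    (hA : A.IsHermitian) (h0 : A.trace = 0) (h2 : (A * A).trace = 2) (k : Fin D) :
    hA.eigenvalues k ^ 2 ≤ 2 * ((D : ℝ) - 1) / D := by
  set lam := hA.eigenvalues with hlam
  have htr2 := herm_trace_sq_eq' hA
  have hs0 : ∑ i, lam i = 0 := by
    have h := herm_trace_eq' hA
    rw [h0] at h
    have h' : ((∑ i, lam i : ℝ) : ℂ) = 0 := by push_cast; exact h.symm
    exact_mod_cast h'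
  have hs2 : ∑ i, lam i ^ 2 = 2 := by
    rw [h2] at htr2
    have h' : ((∑ i, lam i ^ 2 : ℝ) : ℂ) = 2 := by push_cast; exact htr2.symm
    exact_mod_cast h'
  have herase : ∑ i ∈ univ.erase k, lam i = -lam k := by
    have := Finset.add_sum_erase univ lam (mem_univ k)
    linarith [hs0 ▸ this]
  have herase2 : ∑ i ∈ univ.erase k, lam i ^ 2 = 2 - lam k ^ 2 := by
    have h := Finset.add_sum_erase univ (fun i => lam i ^ 2) (mem_univ k)
    simp only [hs2] at h
    linarith
  have hcs : (∑ i ∈ univ.erase k, lam i) ^ 2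
      ≤ (univ.erase k).card * ∑ i ∈ univ.erase k, lam i ^ 2 :=
    sq_sum_le_card_mul_sum_sq
  have hcard : ((univ.erase k).card : ℝ) = (D : ℝ) - 1 := by
    rw [Finset.card_erase_of_mem (mem_univ k), Finset.card_univ, Fintype.card_fin]
    have : (1:ℕ) ≤ D := by omega
    push_cast [Nat.cast_sub this]
    ring
  rw [herase, herase2, hcard, neg_sq] at hcs
  have hDpos : (0:ℝ) < D := by positivity
  rw [le_div_iff₀ hDpos]
  nlinarith [hcs, hDpos]

private lemma comb_herm' {N d : ℕ} (Υ : Fin N → Matrix (Fin d) (Fin d) ℂ)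
    (hh : ∀ k, (Υ k).IsHermitian) (w : Fin N → ℝ) :
    (∑ i, (w i : ℂ) • Υ i).IsHermitian := by
  unfold Matrix.IsHermitian
  rw [conjTranspose_sum]
  refine Finset.sum_congr rfl fun i _ => ?_
  rw [conjTranspose_smul, (hh i).eq, Complex.star_def, Complex.conj_ofReal]

private lemma comb_trace' {N d : ℕ} (Υ : Fin N → Matrix (Fin d) (Fin d) ℂ)
    (h0 : ∀ k, (Υ k).trace = 0) (w : Fin N → ℝ) :
    (∑ i, (w i : ℂ) • Υ i).trace = 0 := by
  rw [trace_sum]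
  simp [trace_smul, h0]

private lemma comb_trace_sq' {N d : ℕ} (Υ : Fin N → Matrix (Fin d) (Fin d) ℂ)
    (horth : ∀ k m, (Υ k * Υ m).trace = if k = m then 2 else 0)
    (w : Fin N → ℝ) (hw : ∑ i, w i ^ 2 = 1) :
    ((∑ i, (w i : ℂ) • Υ i) * (∑ i, (w i : ℂ) • Υ i)).trace = 2 := by
  rw [Finset.sum_mul_sum]
  simp only [smul_mul_assoc, mul_smul_comm, trace_sum, trace_smul, smul_smul, horth,
    smul_eq_mul]
  have : ∀ i : Fin N, ∑ j, (w j : ℂ) * (w i : ℂ) * (if i = j then (2:ℂ) else 0)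
      = (w i : ℂ) * w i * 2 := by
    intro i
    rw [Finset.sum_eq_single i]
    · simp
    · intro b _ hbi
      rw [if_neg fun h => hbi h.symm]
      ring
    · intro h
      exact absurd (mem_univ i) h
  rw [Finset.sum_congr rfl fun i _ => this i]
  have : ((∑ i, w i * w i * 2 : ℝ) : ℂ) = ((2:ℝ):ℂ) := by
    norm_cast
    calc ∑ i, w i * w i * 2 = 2 * ∑ i, w i ^ 2 := by
          rw [Finset.mul_sum]; congr 1; funext i; ring
      _ = 2 := by rw [hw]; ring
  push_cast at this
  exact this

private lemma neg_kron' {l m n p : Type*} (A : Matrix l m ℂ) (B : Matrix n p ℂ) :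
    (-A) ⊗ₖ B = -(A ⊗ₖ B) := by
  ext ⟨i,j⟩ ⟨k,l⟩; simp [Matrix.kroneckerMap_apply]

private lemma kron_neg' {l m n p : Type*} (A : Matrix l m ℂ) (B : Matrix n p ℂ) :
    A ⊗ₖ (-B) = -(A ⊗ₖ B) := by
  ext ⟨i,j⟩ ⟨k,l⟩; simp [Matrix.kroneckerMap_apply]

private lemma kron_expand_identity' {d : ℕ} (c : ℂ) (A B : Matrix (Fin d) (Fin d) ℂ) :
    (c • 1 - A) ⊗ₖ (c • 1 + B) + (c • 1 + A) ⊗ₖ (c • 1 - B)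
      = (2 * (c * c)) • (1 : Matrix (Fin d × Fin d) (Fin d × Fin d) ℂ)
        - (2 : ℂ) • (A ⊗ₖ B) := by
  have h1 : ∀ X Y : Matrix (Fin d) (Fin d) ℂ,
      (c • 1 + X) ⊗ₖ (c • 1 + Y) = (c * c) • (1 : Matrix (Fin d × Fin d) (Fin d × Fin d) ℂ)
        + c • ((1 : Matrix (Fin d) (Fin d) ℂ) ⊗ₖ Y)
        + c • (X ⊗ₖ (1 : Matrix (Fin d) (Fin d) ℂ)) + X ⊗ₖ Y := by
    intro X Y
    rw [add_kronecker, kronecker_add, kronecker_add, smul_kronecker, smul_kronecker,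
      kronecker_smul, kronecker_smul, one_kronecker_one, smul_smul]
    abel
  have e1 := h1 (-A) B
  have e2 := h1 A (-B)
  rw [neg_kron', neg_kron'] at e1
  rw [kron_neg', kron_neg'] at e2
  rw [sub_eq_add_neg (c • (1 : Matrix (Fin d) (Fin d) ℂ)) A, e1,
    sub_eq_add_neg (c • (1 : Matrix (Fin d) (Fin d) ℂ)) B, e2]
  module

private lemma trace_kron_comb' {d N₁ N₂ : ℕ} (ρ : Matrix (Fin d × Fin d) (Fin d × Fin d) ℂ)
    (Υ₁ : Fin N₁ → Matrix (Fin d) (Fin d) ℂ) (Υ₂ : Fin N₂ → Matrix (Fin d) (Fin d) ℂ)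
    (a : Fin N₁ → ℝ) (b : Fin N₂ → ℝ) :
    ((ρ * ((∑ i, (a i : ℂ) • Υ₁ i) ⊗ₖ (∑ j, (b j : ℂ) • Υ₂ j))).trace).re
      = ∑ i, ∑ j, a i * b j * ((ρ * (Υ₁ i ⊗ₖ Υ₂ j)).trace).re := by
  have hk : (∑ i, (a i : ℂ) • Υ₁ i) ⊗ₖ (∑ j, (b j : ℂ) • Υ₂ j)
      = ∑ i, ∑ j, ((a i : ℂ) * (b j : ℂ)) • (Υ₁ i ⊗ₖ Υ₂ j) := by
    ext ⟨p1, p2⟩ ⟨q1, q2⟩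
    simp only [Matrix.kroneckerMap_apply, Matrix.sum_apply, Matrix.smul_apply, smul_eq_mul]
    rw [Finset.sum_mul_sum]
    exact Finset.sum_congr rfl fun i _ => Finset.sum_congr rfl fun j _ => by ring
  rw [hk]
  rw [Matrix.mul_sum, trace_sum, Complex.re_sum]
  refine Finset.sum_congr rfl fun i _ => ?_
  rw [Matrix.mul_sum, trace_sum, Complex.re_sum]
  refine Finset.sum_congr rfl fun j _ => ?_
  rw [Matrix.mul_smul, trace_smul, smul_eq_mul]
  rw [show ((a i : ℂ) * (b j : ℂ)) = (((a i * b j : ℝ)) : ℂ) by push_cast; ring]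
  simp [Complex.mul_re]

end AuxStmt19

/-- for every two-qudit state `ρ` on `ℂ^d⊗ℂ^d`, the spectral norm of the
correlation matrix satisfies `‖T_ρ‖₀ = sup_{‖n‖=1} ‖T_ρ n‖ ≤ 2(d-1)/d`. -/
theorem stmt19 {d : ℕ} (hd : 2 ≤ d)
    (ρ : Matrix (Fin d × Fin d) (Fin d × Fin d) ℂ) (hρ : IsState ρ)
    (Υ₁ : Fin (d ^ 2 - 1) → Matrix (Fin d) (Fin d) ℂ) (hΥ₁ : IsBlochBasis d Υ₁)
    (Υ₂ : Fin (d ^ 2 - 1) → Matrix (Fin d) (Fin d) ℂ) (hΥ₂ : IsBlochBasis d Υ₂) :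
    ∀ n : Fin (d ^ 2 - 1) → ℝ, (∑ i, n i ^ 2 = 1) →
      Real.sqrt (∑ j, ((corrMatrix ρ Υ₁ Υ₂).mulVec n j) ^ 2) ≤ 2 * ((d : ℝ) - 1) / d :=  by
  intro n hn
  obtain ⟨hρpsd, hρtr⟩ := hρ
  obtain ⟨-, h1h, h1t, h1o⟩ := hΥ₁
  obtain ⟨-, h2h, h2t, h2o⟩ := hΥ₂
  have hd2 : (2:ℝ) ≤ (d:ℝ) := by exact_mod_cast hd
  have hdpos : (0:ℝ) < d := by linarith
  have hrhs0 : (0:ℝ) ≤ 2 * ((d:ℝ) - 1) / d := by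
    apply div_nonneg <;> linarith
  set T := corrMatrix ρ Υ₁ Υ₂ with hTdef
  set v := T.mulVec n with hvdef
  have hS0 : (0:ℝ) ≤ ∑ j, v j ^ 2 := Finset.sum_nonneg fun j _ => sq_nonneg _
  rcases eq_or_lt_of_le hS0 with hS | hSpos
  · rw [← hS, Real.sqrt_zero]; exact hrhs0
  set t := Real.sqrt (∑ j, v j ^ 2) with htdef
  have ht2 : t ^ 2 = ∑ j, v j ^ 2 := Real.sq_sqrt hS0
  have htpos : 0 < t := Real.sqrt_pos.mpr hSpos
  set m : Fin (d^2-1) → ℝ := fun j => v j / t with hmdef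
  have hm : ∑ j, m j ^ 2 = 1 := by
    simp only [hmdef, div_pow]
    rw [← Finset.sum_div, ← ht2]
    exact div_self (by positivity)
  set A := ∑ i, (m i : ℂ) • Υ₁ i with hAdef
  set B := ∑ k, (n k : ℂ) • Υ₂ k with hBdef
  have hAh : A.IsHermitian := comb_herm' Υ₁ h1h m
  have hBh : B.IsHermitian := comb_herm' Υ₂ h2h n
  have hAt : A.trace = 0 := comb_trace' Υ₁ h1t m
  have hBt : B.trace = 0 := comb_trace' Υ₂ h2t n
  have hA2 : (A * A).trace = 2 := comb_trace_sq' Υ₁ h1o m hm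
  have hB2 : (B * B).trace = 2 := comb_trace_sq' Υ₂ h2o n hn
  set cR := Real.sqrt (2 * ((d:ℝ) - 1) / d) with hcRdef
  have hcR0 : 0 ≤ cR := Real.sqrt_nonneg _
  have hc2 : cR ^ 2 = 2 * ((d:ℝ) - 1) / d := Real.sq_sqrt hrhs0
  have hbound : ∀ {M : Matrix (Fin d) (Fin d) ℂ} (hM : M.IsHermitian),
      M.trace = 0 → (M * M).trace = 2 → ((cR : ℂ) • 1 - M).PosSemidef := by
    intro M hM hM0 hM2
    refine sub_psd' hM cR fun i => ?_
    have h := eig_bound' hd hM hM0 hM2 i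
    rw [← hc2] at h
    nlinarith [h, hcR0]
  have hA1p := hbound hAh hAt hA2
  have hB1p := hbound hBh hBt hB2
  have hA2p : ((cR : ℂ) • 1 + A).PosSemidef := by
    have := hbound hAh.neg (by rw [trace_neg, hAt, neg_zero]) (by rw [neg_mul_neg, hA2])
    rwa [sub_neg_eq_add] at this
  have hB2p : ((cR : ℂ) • 1 + B).PosSemidef := by
    have := hbound hBh.neg (by rw [trace_neg, hBt, neg_zero]) (by rw [neg_mul_neg, hB2])
    rwa [sub_neg_eq_add] at this
  have hMp : (((cR:ℂ) • 1 - A) ⊗ₖ ((cR:ℂ) • 1 + B)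
      + ((cR:ℂ) • 1 + A) ⊗ₖ ((cR:ℂ) • 1 - B)).PosSemidef :=
    (kron_posSemidef' hA1p hB2p).add (kron_posSemidef' hA2p hB1p)
  have hre := trace_mul_psd_re_nonneg' hρpsd hMp
  rw [kron_expand_identity'] at hre
  have hcomp : (ρ * ((2 * ((cR:ℂ) * cR)) • (1 : Matrix (Fin d × Fin d) (Fin d × Fin d) ℂ)
      - (2:ℂ) • (A ⊗ₖ B))).trace
      = (2 * ((cR:ℂ) * cR)) - (2:ℂ) * (ρ * (A ⊗ₖ B)).trace := by
    rw [Matrix.mul_sub, Matrix.mul_smul, Matrix.mul_smul, mul_one, trace_sub, trace_smul,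
      trace_smul, hρtr, smul_eq_mul, smul_eq_mul, mul_one]
  rw [hcomp] at hre
  have hW : ((ρ * (A ⊗ₖ B)).trace).re = t := by
    rw [hAdef, hBdef, trace_kron_comb']
    have hvj : ∀ j, v j = ∑ k, T j k * n k := fun j => by
      simp [hvdef, Matrix.mulVec, dotProduct]
    have h1 : ∀ j, ∑ k, m j * n k * ((ρ * (Υ₁ j ⊗ₖ Υ₂ k)).trace).re = m j * v j := by
      intro j
      rw [hvj j, Finset.mul_sum]
      refine Finset.sum_congr rfl fun k _ => ?_
      have hT : T j k = ((ρ * (Υ₁ j ⊗ₖ Υ₂ k)).trace).re := by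
        rw [hTdef]; rfl
      rw [hT]; ring
    rw [Finset.sum_congr rfl fun j _ => h1 j]
    have h2 : ∀ j, m j * v j = v j ^ 2 / t := fun j => by rw [hmdef]; ring
    rw [Finset.sum_congr rfl fun j _ => h2 j, ← Finset.sum_div, ← ht2, sq,
      mul_div_assoc, div_self htpos.ne', mul_one]
  have hre' : (0:ℝ) ≤ 2 * (cR * cR) - 2 * t := by
    have hre2 : ((2 * ((cR:ℂ) * cR)) - (2:ℂ) * (ρ * (A ⊗ₖ B)).trace).re
        = 2 * (cR * cR) - 2 * ((ρ * (A ⊗ₖ B)).trace).re := by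
      simp [Complex.sub_re, Complex.mul_re]
    rw [hre2, hW] at hre
    exact hre
  have hfin : t ≤ cR ^ 2 := by nlinarith [hre']
  rw [hc2] at hfin
  exact hfin
end
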